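/- arXiv:0706.0460 — 2 statements merged into one kernel-verified Lean document; each statement's English description precedes it below -/
import Mathlib

section
/- Let s_i = (i,i+1) be a simple transposition and let p_{s_i} be its canonical class. For every transposition (j k) with 1 ≤ j < k ≤ n: if j ≤ i and i+1 ≤ k then p_{s_i}((j k)) = t_j − t_k, and otherwise p_{s_i}((j k)) = 0. Consequently, for every w ∈ S_n, w(p_{s_i}((j k))) = t_{w(j)} − t_{w(k)} whenever j ≤ i < i+1 ≤ k. -/
open MvPolynomial Equiv Finset

noncomputable section

/-- The polynomial ring ℂ[t₁,…,tₙ]. -/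
abbrev Pol (n : ℕ) : Type := MvPolynomial (Fin n) ℂ

/-- The action of a permutation `w` on polynomials by the substitution `tᵢ ↦ t_{w(i)}`. -/
def pact {n : ℕ} (w : Perm (Fin n)) (f : Pol n) : Pol n := rename ⇑w f

/-- The GKM condition defining `R ⊆ ∏_{v ∈ Sₙ} ℂ[t₁,…,tₙ]`: for every `v` and every
transposition `(i j)` with `i < j`, the difference `p(v) − p((i j)v)` is divisible by
`tᵢ − tⱼ`. -/
def GKM (n : ℕ) (p : Perm (Fin n) → Pol n) : Prop :=
  ∀ (v : Perm (Fin n)) (i j : Fin n), i < j →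
    (X i - X j : Pol n) ∣ (p v - p (Equiv.swap i j * v))

/-- The length of a permutation: its number of inversions. -/
def len {n : ℕ} (w : Perm (Fin n)) : ℕ :=
  (Finset.univ.filter fun q : Fin n × Fin n => q.1 < q.2 ∧ w q.2 < w q.1).card

/-- Bruhat order: the partial order generated by `u < (i j) u` whenever `ℓ(u) < ℓ((i j)u)`. -/
def bruhatLE {n : ℕ} : Perm (Fin n) → Perm (Fin n) → Prop :=
  Relation.ReflTransGen
    (fun u v => (∃ i j : Fin n, i < j ∧ v = Equiv.swap i j * u) ∧ len u < len v)

/-- `p` is the canonical class (equivariant Schubert class) of `w`: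
(i) each component is homogeneous of degree `ℓ(w)`; (ii) `p(v) = 0` unless `v ≥ w` in
Bruhat order; (iii) `p(w) = ∏ (tᵢ − tⱼ)` over pairs `i < j` with `ℓ((i j)w) < ℓ(w)`;
and `p` satisfies the GKM conditions. -/
def IsCanonical {n : ℕ} (w : Perm (Fin n)) (p : Perm (Fin n) → Pol n) : Prop :=
  GKM n p ∧
  (∀ v, (p v).IsHomogeneous (len w)) ∧
  (∀ v, ¬ bruhatLE w v → p v = 0) ∧
  p w = ∏ q ∈ Finset.univ.filter
      (fun q : Fin n × Fin n => q.1 < q.2 ∧ len (Equiv.swap q.1 q.2 * w) < len w),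
      (X q.1 - X q.2 : Pol n)

/-- The simple transposition `sᵢ = (i, i+1)`. -/
def sT (n i : ℕ) (h : i + 1 < n) : Perm (Fin n) :=
  Equiv.swap ⟨i, Nat.lt_of_succ_lt h⟩ ⟨i + 1, h⟩

/-- The dot (left) action: `(w·p)(v) = w(p(w⁻¹ v))`. -/
def dot {n : ℕ} (w : Perm (Fin n)) (p : Perm (Fin n) → Pol n) : Perm (Fin n) → Pol n :=
  fun v => pact w (p (w⁻¹ * v))

/-- The star (right) action: `(p * w)(v) = p(vw)`. -/
def starAct {n : ℕ} (p : Perm (Fin n) → Pol n) (w : Perm (Fin n)) :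
    Perm (Fin n) → Pol n :=
  fun v => p (v * w)

/-- `R` as a `ℂ[t₁,…,tₙ]`-submodule of the product. -/
def gkmSubmodule (n : ℕ) : Submodule (Pol n) (Perm (Fin n) → Pol n) where
  carrier := {p | GKM n p}
  add_mem' := by
    intro a b ha hb v i j hij
    have h := dvd_add (ha v i j hij) (hb v i j hij)
    simpa [Pi.add_apply, add_sub_add_comm] using h
  zero_mem' := by
    intro v i j hij
    simp
  smul_mem' := by
    intro c p hp v i j hij
    have h := (hp v i j hij).mul_left c
    simpa [Pi.smul_apply, smul_eq_mul, mul_sub] using h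

/-- The maximal ideal `𝔪 = (t₁,…,tₙ) ⊆ ℂ[t₁,…,tₙ]`. -/
def mIdeal (n : ℕ) : Ideal (Pol n) := Ideal.span (Set.range (X : Fin n → Pol n))

/-- The submodule `𝔪R`: finite sums of products `c • p` with `c ∈ 𝔪` and `p ∈ R`. -/
def mR (n : ℕ) : Submodule (Pol n) (Perm (Fin n) → Pol n) :=
  Submodule.span (Pol n) {q | ∃ c ∈ mIdeal n, ∃ p, GKM n p ∧ q = c • p}

section AuxSCL

variable {n : ℕ}

/-- The inversion set of a permutation. -/
def invSet (v : Perm (Fin n)) : Finset (Fin n × Fin n) :=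
  Finset.univ.filter fun q : Fin n × Fin n => q.1 < q.2 ∧ v q.2 < v q.1

lemma len_def (v : Perm (Fin n)) : len v = (invSet v).card := rfl

lemma mem_invSet {v : Perm (Fin n)} {q : Fin n × Fin n} :
    q ∈ invSet v ↔ q.1 < q.2 ∧ v q.2 < v q.1 := by
  simp [invSet]

lemma scl_len_one : len (1 : Perm (Fin n)) = 0 := by
  rw [len_def, Finset.card_eq_zero]
  ext q
  simp only [mem_invSet, Finset.notMem_empty, iff_false, not_and, Perm.one_apply]
  exact fun h => not_lt.2 h.le

lemma eq_one_of_len_eq_zero {v : Perm (Fin n)} (h : len v = 0) : v = 1 := by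
  rw [len_def, Finset.card_eq_zero] at h
  have hmono : StrictMono ⇑v := by
    intro x y hxy
    by_contra hle
    have hne : v x ≠ v y := fun e => hxy.ne (v.injective e)
    have hlt : v y < v x := lt_of_le_of_ne (not_lt.1 hle) fun e => hne e.symm
    have : (x, y) ∈ invSet v := mem_invSet.2 ⟨hxy, hlt⟩
    simp [h] at this
  have hmono' : StrictMono ⇑v.symm := by
    intro a b hab
    by_contra hle
    have h2 : v (v.symm b) ≤ v (v.symm a) := hmono.le_iff_le.2 (not_lt.1 hle)
    simp only [Equiv.apply_symm_apply] at h2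
    exact absurd hab (not_lt.2 h2)
  apply Equiv.ext
  intro x
  have hwf : WellFoundedLT (Fin n) := inferInstance
  have h1 : x ≤ v x := hmono.le_apply
  have h2 : v x ≤ x := by
    have h3 := hmono'.le_apply (x := v x)
    simpa using h3
  simpa [Perm.one_apply] using le_antisymm h2 h1

lemma len_eq_zero_iff {v : Perm (Fin n)} : len v = 0 ↔ v = 1 :=
  ⟨eq_one_of_len_eq_zero, fun h => h ▸ scl_len_one⟩

end AuxSCL
section AuxSCL2

variable {n : ℕ}

/-- Injection from inversions of `v * swap p1 p2` into inversions of `v` minus `(p1,p2)`. -/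
def phiF (p1 p2 : Fin n) (q : Fin n × Fin n) : Fin n × Fin n :=
  if (q.1 = p1 ∧ p1 < q.2 ∧ q.2 < p2) ∨ (q.2 = p2 ∧ p1 < q.1 ∧ q.1 < p2) then q
  else (Equiv.swap p1 p2 q.1, Equiv.swap p1 p2 q.2)

lemma phi_spec {v : Perm (Fin n)} {p1 p2 : Fin n} (h12 : p1 < p2) (hinv : v p2 < v p1)
    {q : Fin n × Fin n} (hq : q ∈ invSet (v * Equiv.swap p1 p2)) :
    phiF p1 p2 q ∈ invSet v ∧ phiF p1 p2 q ≠ (p1, p2) ∧ phiF p1 p2 (phiF p1 p2 q) = q := by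
  obtain ⟨x, y⟩ := q
  rw [mem_invSet] at hq
  obtain ⟨hxy, hv⟩ := hq
  simp only [Perm.mul_apply] at hv
  have hne12 : p1 ≠ p2 := h12.ne
  by_cases hx1 : x = p1
  · subst x
    by_cases hy2 : y = p2
    · subst y
      rw [Equiv.swap_apply_right, Equiv.swap_apply_left] at hv
      exact absurd hinv (not_lt.2 hv.le)
    · have hy1 : y ≠ p1 := hxy.ne'
      have hsy : Equiv.swap p1 p2 y = y := Equiv.swap_apply_of_ne_of_ne hy1 hy2
      rw [Equiv.swap_apply_left, hsy] at hv
      by_cases hyp : y < p2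
      · -- case B : keep (p1, y)
        have hphi : phiF p1 p2 (p1, y) = (p1, y) := by
          rw [phiF, if_pos (Or.inl ⟨rfl, hxy, hyp⟩)]
        refine ⟨?_, ?_, ?_⟩
        · rw [hphi]; exact mem_invSet.2 ⟨hxy, lt_trans hv hinv⟩
        · rw [hphi]; intro h; rw [Prod.mk.injEq] at h; exact hy2 h.2
        · rw [hphi, hphi]
      · -- case C : (p1, y) ↦ (p2, y), y > p2
        have hyg : p2 < y := lt_of_le_of_ne (not_lt.1 hyp) (fun e => hy2 e.symm)
        have hcond : ¬((p1 = p1 ∧ p1 < y ∧ y < p2) ∨ (y = p2 ∧ p1 < p1 ∧ p1 < p2)) := by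
          rintro (⟨-, -, h3⟩ | ⟨h1, -, -⟩); exact hyp h3; exact hy2 h1
        have hphi : phiF p1 p2 (p1, y) = (p2, y) := by
          rw [phiF]; rw [if_neg hcond]; rw [Equiv.swap_apply_left, hsy]
        refine ⟨?_, ?_, ?_⟩
        · rw [hphi]; exact mem_invSet.2 ⟨hyg, hv⟩
        · rw [hphi]; intro h; rw [Prod.mk.injEq] at h; exact hne12 h.1.symm
        · rw [hphi]
          have hcond2 : ¬((p2 = p1 ∧ p1 < y ∧ y < p2) ∨ (y = p2 ∧ p1 < p2 ∧ p2 < p2)) := by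
            rintro (⟨h1, -, -⟩ | ⟨h1, -, -⟩); exact hne12 h1.symm; exact hy2 h1
          rw [phiF, if_neg hcond2, Equiv.swap_apply_right, hsy]
  · by_cases hy2 : y = p2
    · subst y
      have hx2 : x ≠ p2 := hxy.ne
      have hsx : Equiv.swap p1 p2 x = x := Equiv.swap_apply_of_ne_of_ne hx1 hx2
      rw [Equiv.swap_apply_right, hsx] at hv
      by_cases hpx : p1 < x
      · -- case D1 : keep (x, p2)
        have hphi : phiF p1 p2 (x, p2) = (x, p2) := by
          rw [phiF, if_pos (Or.inr ⟨rfl, hpx, hxy⟩)]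
        refine ⟨?_, ?_, ?_⟩
        · rw [hphi]; exact mem_invSet.2 ⟨hxy, lt_trans hinv hv⟩
        · rw [hphi]; intro h; rw [Prod.mk.injEq] at h; exact hx1 h.1
        · rw [hphi, hphi]
      · -- case D2 : (x, p2) ↦ (x, p1), x < p1
        have hxl : x < p1 := lt_of_le_of_ne (not_lt.1 hpx) hx1
        have hcond : ¬((x = p1 ∧ p1 < p2 ∧ p2 < p2) ∨ (p2 = p2 ∧ p1 < x ∧ x < p2)) := by
          rintro (⟨h1, -, -⟩ | ⟨-, h2, -⟩); exact hx1 h1; exact hpx h2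
        have hphi : phiF p1 p2 (x, p2) = (x, p1) := by
          rw [phiF, if_neg hcond, hsx, Equiv.swap_apply_right]
        refine ⟨?_, ?_, ?_⟩
        · rw [hphi]; exact mem_invSet.2 ⟨hxl, hv⟩
        · rw [hphi]; intro h; rw [Prod.mk.injEq] at h; exact hne12 h.2
        · rw [hphi]
          have hcond2 : ¬((x = p1 ∧ p1 < p1 ∧ p1 < p2) ∨ (p1 = p2 ∧ p1 < x ∧ x < p2)) := by
            rintro (⟨h1, -, -⟩ | ⟨h1, -, -⟩); exact hx1 h1; exact hne12 h1
          rw [phiF, if_neg hcond2, hsx, Equiv.swap_apply_left]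
    · by_cases hx2 : x = p2
      · -- case E : (p2, y) ↦ (p1, y), y > p2
        subst x
        have hgy : p1 < y := h12.trans hxy
        have hy1 : y ≠ p1 := hgy.ne'
        have hsy : Equiv.swap p1 p2 y = y := Equiv.swap_apply_of_ne_of_ne hy1 hy2
        rw [Equiv.swap_apply_right, hsy] at hv
        have hcond : ¬((p2 = p1 ∧ p1 < y ∧ y < p2) ∨ (y = p2 ∧ p1 < p2 ∧ p2 < p2)) := by
          rintro (⟨h1, -, -⟩ | ⟨h1, -, -⟩); exact hne12 h1.symm; exact hy2 h1
        have hphi : phiF p1 p2 (p2, y) = (p1, y) := by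
          rw [phiF, if_neg hcond, Equiv.swap_apply_right, hsy]
        refine ⟨?_, ?_, ?_⟩
        · rw [hphi]; exact mem_invSet.2 ⟨hgy, hv⟩
        · rw [hphi]; intro h; rw [Prod.mk.injEq] at h; exact hy2 h.2
        · rw [hphi]
          have hcond2 : ¬((p1 = p1 ∧ p1 < y ∧ y < p2) ∨ (y = p2 ∧ p1 < p1 ∧ p1 < p2)) := by
            rintro (⟨-, -, h3⟩ | ⟨h1, -, -⟩)
            · exact absurd h3 (not_lt.2 hxy.le)
            · exact hy2 h1
          rw [phiF, if_neg hcond2, Equiv.swap_apply_left, hsy]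
      · by_cases hy1 : y = p1
        · -- case F : (x, p1) ↦ (x, p2), x < p1
          subst y
          have hx2' : x < p2 := hxy.trans h12
          have hsx : Equiv.swap p1 p2 x = x := Equiv.swap_apply_of_ne_of_ne hx1 hx2
          rw [Equiv.swap_apply_left, hsx] at hv
          have hcond : ¬((x = p1 ∧ p1 < p1 ∧ p1 < p2) ∨ (p1 = p2 ∧ p1 < x ∧ x < p2)) := by
            rintro (⟨h1, -, -⟩ | ⟨h1, -, -⟩); exact hx1 h1; exact hne12 h1
          have hphi : phiF p1 p2 (x, p1) = (x, p2) := by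
            rw [phiF, if_neg hcond, hsx, Equiv.swap_apply_left]
          refine ⟨?_, ?_, ?_⟩
          · rw [hphi]; exact mem_invSet.2 ⟨hx2', hv⟩
          · rw [hphi]; intro h; rw [Prod.mk.injEq] at h; exact hx1 h.1
          · rw [hphi]
            have hcond2 : ¬((x = p1 ∧ p1 < p2 ∧ p2 < p2) ∨ (p2 = p2 ∧ p1 < x ∧ x < p2)) := by
              rintro (⟨h1, -, -⟩ | ⟨-, h2, -⟩); exact hx1 h1; exact absurd h2 (not_lt.2 hxy.le)
            rw [phiF, if_neg hcond2, hsx, Equiv.swap_apply_right]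
        · -- case G : untouched
          have hsx : Equiv.swap p1 p2 x = x := Equiv.swap_apply_of_ne_of_ne hx1 hx2
          have hsy : Equiv.swap p1 p2 y = y := Equiv.swap_apply_of_ne_of_ne hy1 hy2
          rw [hsx, hsy] at hv
          have hcond : ¬((x = p1 ∧ p1 < y ∧ y < p2) ∨ (y = p2 ∧ p1 < x ∧ x < p2)) := by
            rintro (⟨h1, -, -⟩ | ⟨h1, -, -⟩); exact hx1 h1; exact hy2 h1
          have hphi : phiF p1 p2 (x, y) = (x, y) := by
            rw [phiF, if_neg hcond, hsx, hsy]
          refine ⟨?_, ?_, ?_⟩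
          · rw [hphi]; exact mem_invSet.2 ⟨hxy, hv⟩
          · rw [hphi]; intro h; rw [Prod.mk.injEq] at h; exact hx1 h.1
          · rw [hphi, hphi]

lemma len_mul_swap_lt {v : Perm (Fin n)} {p1 p2 : Fin n} (h12 : p1 < p2)
    (hinv : v p2 < v p1) : len (v * Equiv.swap p1 p2) < len v := by
  have hmem : (p1, p2) ∈ invSet v := mem_invSet.2 ⟨h12, hinv⟩
  have hcard : (invSet (v * Equiv.swap p1 p2)).card ≤ ((invSet v).erase (p1, p2)).card := by
    apply Finset.card_le_card_of_injOn (phiF p1 p2)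
    · intro q hq
      obtain ⟨h1, h2, -⟩ := phi_spec h12 hinv hq
      exact Finset.mem_erase.2 ⟨h2, h1⟩
    · intro q hq q' hq' hEq
      have e1 := (phi_spec h12 hinv (Finset.mem_coe.1 hq)).2.2
      have e2 := (phi_spec h12 hinv (Finset.mem_coe.1 hq')).2.2
      rw [← e1, ← e2, hEq]
  rw [Finset.card_erase_of_mem hmem] at hcard
  have hpos : 0 < (invSet v).card := Finset.card_pos.2 ⟨_, hmem⟩
  rw [len_def, len_def]
  omega

end AuxSCL2
section AuxSCL3

variable {n : ℕ}

/-- The explicit GKM class of the simple transposition `sᵢ`: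
`qcl i v = ∑_{m ≤ i} (X m - X (v m))`. -/
def qcl (i : ℕ) (v : Perm (Fin n)) : Pol n :=
  ∑ m ∈ Finset.univ.filter (fun m : Fin n => (m : ℕ) ≤ i), (X m - X (v m))

lemma qcl_isHomogeneous (i : ℕ) (v : Perm (Fin n)) : (qcl i v).IsHomogeneous 1 := by
  apply IsHomogeneous.sum
  intro m _
  exact (isHomogeneous_X _ _).sub (isHomogeneous_X _ _)

lemma qcl_gkm (i : ℕ) : GKM n (qcl i) := by
  intro v a b hab
  have hkey : qcl i v - qcl i (Equiv.swap a b * v) =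
      ∑ m ∈ Finset.univ.filter (fun m : Fin n => (m : ℕ) ≤ i),
        (X (Equiv.swap a b (v m)) - X (v m) : Pol n) := by
    rw [qcl, qcl, ← Finset.sum_sub_distrib]
    apply Finset.sum_congr rfl
    intro m _
    rw [Perm.mul_apply]
    ring
  rw [hkey]
  apply Finset.dvd_sum
  intro m _
  by_cases h1 : v m = a
  · rw [h1, Equiv.swap_apply_left]
    exact ⟨-1, by ring⟩
  · by_cases h2 : v m = b
    · rw [h2, Equiv.swap_apply_right]
    · rw [Equiv.swap_apply_of_ne_of_ne h1 h2, sub_self]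
      exact dvd_zero _

lemma qcl_one (i : ℕ) : qcl i (1 : Perm (Fin n)) = 0 :=
  Finset.sum_eq_zero fun m _ => by simp

lemma qcl_swap (i : ℕ) {a b : Fin n} (hab : a < b) :
    qcl i (Equiv.swap a b) =
      (if (a : ℕ) ≤ i ∧ i + 1 ≤ (b : ℕ) then X a - X b else (0 : Pol n)) := by
  have hab' : (a : ℕ) < (b : ℕ) := hab
  by_cases hbi : (b : ℕ) ≤ i
  · rw [if_neg (by omega)]
    have hsub : ({a, b} : Finset (Fin n)) ⊆
        Finset.univ.filter (fun m : Fin n => (m : ℕ) ≤ i) := by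
      intro m hm
      simp only [Finset.mem_insert, Finset.mem_singleton] at hm
      rcases hm with rfl | rfl
      · exact Finset.mem_filter.2 ⟨Finset.mem_univ _, by omega⟩
      · exact Finset.mem_filter.2 ⟨Finset.mem_univ _, hbi⟩
    have hz : ∀ m ∈ Finset.univ.filter (fun m : Fin n => (m : ℕ) ≤ i),
        m ∉ ({a, b} : Finset (Fin n)) → (X m - X (Equiv.swap a b m) : Pol n) = 0 := by
      intro m _ hm
      simp only [Finset.mem_insert, Finset.mem_singleton, not_or] at hm
      rw [Equiv.swap_apply_of_ne_of_ne hm.1 hm.2, sub_self]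
    rw [qcl, ← Finset.sum_subset hsub hz, Finset.sum_pair hab.ne,
        Equiv.swap_apply_left, Equiv.swap_apply_right]
    ring
  · by_cases hai : (a : ℕ) ≤ i
    · rw [if_pos ⟨hai, by omega⟩, qcl, Finset.sum_eq_single a]
      · rw [Equiv.swap_apply_left]
      · intro m hm hma
        have hm2 := (Finset.mem_filter.1 hm).2
        have hmb : m ≠ b := by
          intro e
          rw [e] at hm2
          exact hbi hm2
        rw [Equiv.swap_apply_of_ne_of_ne hma hmb, sub_self]
      · intro h
        exact absurd (Finset.mem_filter.2 ⟨Finset.mem_univ a, hai⟩) h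
    · rw [if_neg (by omega), qcl]
      apply Finset.sum_eq_zero
      intro m hm
      have hm2 := (Finset.mem_filter.1 hm).2
      have hma : m ≠ a := by intro e; rw [e] at hm2; exact hai hm2
      have hmb : m ≠ b := by intro e; rw [e] at hm2; exact hbi hm2
      rw [Equiv.swap_apply_of_ne_of_ne hma hmb, sub_self]

end AuxSCL3
section AuxSCL4

variable {n : ℕ}

lemma degree_one_single {s : Fin n →₀ ℕ} (hs : s.degree = 1) :
    ∃ m, s = Finsupp.single m 1 := by
  have hne : s ≠ 0 := by
    intro h
    rw [h, map_zero] at hs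
    exact one_ne_zero hs.symm
  obtain ⟨m, hm⟩ := Finsupp.support_nonempty_iff.2 hne
  refine ⟨m, ?_⟩
  have hsm : 1 ≤ s m := Nat.one_le_iff_ne_zero.2 (Finsupp.mem_support_iff.1 hm)
  have huniq : ∀ m' ∈ s.support, m' = m := by
    intro m' hm'
    by_contra hne'
    have hsm' : 1 ≤ s m' := Nat.one_le_iff_ne_zero.2 (Finsupp.mem_support_iff.1 hm')
    have hsub : ({m, m'} : Finset (Fin n)) ⊆ s.support := by
      intro z hz
      simp only [Finset.mem_insert, Finset.mem_singleton] at hz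
      rcases hz with rfl | rfl
      · exact hm
      · exact hm'
    have h2 : s m + s m' ≤ s.degree := by
      rw [Finsupp.degree, ← Finset.sum_pair (fun e => hne' e.symm : m ≠ m')]
      exact Finset.sum_le_sum_of_subset hsub
    omega
  have hsupp : s.support = {m} := by
    apply Finset.eq_singleton_iff_unique_mem.2
    exact ⟨hm, huniq⟩
  have hdeg : s.degree = s m := by
    rw [Finsupp.degree_apply, hsupp, Finset.sum_singleton]
  obtain ⟨-, hs2⟩ := Finsupp.support_eq_singleton.1 hsupp
  rw [hs2, ← hdeg, hs]

lemma homog_one_repr {f : Pol n} (hf : f.IsHomogeneous 1) :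
    f = ∑ m : Fin n, C (coeff (Finsupp.single m 1) f) * X m := by
  apply MvPolynomial.ext
  intro s
  rw [MvPolynomial.coeff_sum]
  simp only [coeff_C_mul, coeff_X']
  by_cases hs : ∃ m0, s = Finsupp.single m0 1
  · obtain ⟨m0, rfl⟩ := hs
    rw [Finset.sum_eq_single m0]
    · rw [if_pos rfl, mul_one]
    · intro m _ hm
      rw [if_neg, mul_zero]
      intro h
      exact hm (Finsupp.single_left_injective one_ne_zero h)
    · intro h
      exact absurd (Finset.mem_univ m0) h
  · have h0 : coeff s f = 0 := by
      apply hf.coeff_eq_zero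
      intro hdeg
      exact hs (degree_one_single hdeg)
    rw [h0]
    symm
    apply Finset.sum_eq_zero
    intro m _
    rw [if_neg, mul_zero]
    intro h
    exact hs ⟨m, h.symm⟩

lemma coeff_single_CX (c : ℂ) (u e : Fin n) :
    coeff (Finsupp.single e 1) (C c * X u : Pol n) = if u = e then c else 0 := by
  rw [coeff_C_mul, coeff_X']
  by_cases h : u = e
  · rw [if_pos h, if_pos (by rw [h]), mul_one]
  · rw [if_neg h, if_neg, mul_zero]
    intro hh
    exact h (Finsupp.single_left_injective one_ne_zero hh)

lemma coeff_relations {f : Pol n} (hf : f.IsHomogeneous 1) {a b : Fin n} (hab : a ≠ b)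
    (hdvd : (X a - X b : Pol n) ∣ f) :
    (∀ e, e ≠ a → e ≠ b → coeff (Finsupp.single e 1) f = 0) ∧
      coeff (Finsupp.single a 1) f + coeff (Finsupp.single b 1) f = 0 := by
  obtain ⟨g, hg⟩ := hdvd
  set σ : Fin n → Fin n := fun m => if m = a then b else m with hσ
  have hσa : σ a = b := by rw [hσ]; simp
  have hσb : σ b = b := by rw [hσ]; simp [hab.symm]
  have hσo : ∀ m, m ≠ a → σ m = m := by intro m hm; rw [hσ]; simp [hm]
  have hren : rename σ f = 0 := by
    rw [hg, map_mul, map_sub, rename_X, rename_X, hσa, hσb, sub_self, zero_mul]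
  have hren2 : rename σ f =
      ∑ m : Fin n, C (coeff (Finsupp.single m 1) f) * X (σ m) := by
    conv_lhs => rw [homog_one_repr hf]
    rw [map_sum]
    apply Finset.sum_congr rfl
    intro m _
    rw [map_mul, rename_C, rename_X]
  have hsum : ∑ m : Fin n, C (coeff (Finsupp.single m 1) f) * X (σ m) = (0 : Pol n) := by
    rw [← hren2, hren]
  constructor
  · intro e hea heb
    have hc := congrArg (coeff (Finsupp.single e 1)) hsum
    rw [MvPolynomial.coeff_sum, coeff_zero] at hc
    simp only [coeff_single_CX] at hc
    have hconv : ∀ m : Fin n,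
        (if σ m = e then coeff (Finsupp.single m 1) f else 0) =
        (if m = e then coeff (Finsupp.single m 1) f else 0) := by
      intro m
      by_cases hma : m = a
      · rw [if_neg (by rw [hma, hσa]; exact heb.symm), if_neg (by rw [hma]; exact hea.symm)]
      · rw [hσo m hma]
    rw [Finset.sum_congr rfl (fun m _ => hconv m), Finset.sum_ite_eq' Finset.univ e] at hc
    rw [if_pos (Finset.mem_univ e)] at hc
    exact hc
  · have hc := congrArg (coeff (Finsupp.single b 1)) hsum
    rw [MvPolynomial.coeff_sum, coeff_zero] at hc
    simp only [coeff_single_CX] at hc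
    have hconv : ∀ m : Fin n,
        (if σ m = b then coeff (Finsupp.single m 1) f else 0) =
        ((if m = a then coeff (Finsupp.single m 1) f else 0) +
         (if m = b then coeff (Finsupp.single m 1) f else 0)) := by
      intro m
      by_cases hma : m = a
      · rw [if_pos (by rw [hma, hσa]), if_pos hma, if_neg (by rw [hma]; exact hab), add_zero]
      · rw [hσo m hma, if_neg hma, zero_add]
    rw [Finset.sum_congr rfl (fun m _ => hconv m), Finset.sum_add_distrib,
        Finset.sum_ite_eq' Finset.univ a, Finset.sum_ite_eq' Finset.univ b,
        if_pos (Finset.mem_univ a), if_pos (Finset.mem_univ b)] at hc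
    exact hc

lemma linear_zero {f : Pol n} (hf : f.IsHomogeneous 1) {a b c d : Fin n}
    (hab : a < b) (hcd : c < d) (hne : (a, b) ≠ (c, d))
    (h1 : (X a - X b : Pol n) ∣ f) (h2 : (X c - X d : Pol n) ∣ f) : f = 0 := by
  obtain ⟨e1, p1⟩ := coeff_relations hf hab.ne h1
  obtain ⟨e2, p2⟩ := coeff_relations hf hcd.ne h2
  have hb0 : coeff (Finsupp.single a 1) f = 0 ∧ coeff (Finsupp.single b 1) f = 0 := by
    by_cases hac : a = c
    · have hbd : b ≠ d := by
        intro e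
        exact hne (by rw [hac, e])
      have hbc : b ≠ c := by
        rw [← hac]
        exact hab.ne'
      have hcb := e2 b hbc hbd
      constructor
      · have := p1
        rw [hcb, add_zero] at this
        exact this
      · exact hcb
    · by_cases had : a = d
      · have hbd : b ≠ d := by rw [← had]; exact hab.ne'
        have hbc : b ≠ c := by
          have : (c : ℕ) < (d : ℕ) := hcd
          have h2' : (a : ℕ) < (b : ℕ) := hab
          intro e
          rw [e] at h2'
          rw [had] at h2'
          omega
        have hcb := e2 b hbc hbd
        constructor
        · have := p1
          rw [hcb, add_zero] at this
          exact this
        · exact hcb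
      · have hca := e2 a hac had
        constructor
        · exact hca
        · have := p1
          rw [hca, zero_add] at this
          exact this
  have hall : ∀ m, coeff (Finsupp.single m 1) f = 0 := by
    intro m
    by_cases hma : m = a
    · rw [hma]; exact hb0.1
    · by_cases hmb : m = b
      · rw [hmb]; exact hb0.2
      · exact e1 m hma hmb
  rw [homog_one_repr hf]
  apply Finset.sum_eq_zero
  intro m _
  rw [hall m, map_zero, zero_mul]

end AuxSCL4
section AuxSCL5

variable {n : ℕ}

lemma bruhat_mono {w v : Perm (Fin n)} (h : bruhatLE w v) : w = v ∨ len w < len v := by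
  induction h with
  | refl => exact Or.inl rfl
  | tail h1 h2 ih =>
    right
    rcases ih with rfl | hlt
    · exact h2.2
    · exact lt_trans hlt h2.2

lemma swap_eq_of_sorted {x y a b : Fin n} (hxy : x < y) (hab : a < b)
    (h : Equiv.swap x y = Equiv.swap a b) : x = a ∧ y = b := by
  have h1 : Equiv.swap a b x = y := by rw [← h]; exact Equiv.swap_apply_left x y
  by_cases hxa : x = a
  · subst x
    rw [Equiv.swap_apply_left] at h1
    exact ⟨rfl, h1.symm⟩
  · by_cases hxb : x = b
    · subst x
      rw [Equiv.swap_apply_right] at h1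
      exact absurd (hab.trans (h1 ▸ hxy)) (lt_irrefl a)
    · rw [Equiv.swap_apply_of_ne_of_ne hxa hxb] at h1
      exact absurd (h1 ▸ hxy) (lt_irrefl x)

lemma invSet_adjacent (a : Fin n) (h : (a : ℕ) + 1 < n) :
    invSet (Equiv.swap a ⟨(a : ℕ) + 1, h⟩) = {(a, ⟨(a : ℕ) + 1, h⟩)} := by
  set b : Fin n := ⟨(a : ℕ) + 1, h⟩ with hb
  have hab : a < b := by rw [Fin.lt_def, hb]; exact Nat.lt_succ_self _
  ext ⟨x, y⟩
  simp only [mem_invSet, Finset.mem_singleton, Prod.mk.injEq]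
  constructor
  · rintro ⟨hxy, hv⟩
    by_cases hx : x = a
    · subst x
      refine ⟨rfl, ?_⟩
      by_contra hy
      have hy1 : y ≠ a := hxy.ne'
      rw [Equiv.swap_apply_left, Equiv.swap_apply_of_ne_of_ne hy1 hy] at hv
      have h1 : (a : ℕ) < (y : ℕ) := hxy
      have h2 : (y : ℕ) < (a : ℕ) + 1 := hv
      omega
    · exfalso
      by_cases hy : y = b
      · subst y
        have hxb : x ≠ b := hxy.ne
        rw [Equiv.swap_apply_right, Equiv.swap_apply_of_ne_of_ne hx hxb] at hv
        have h1 : (a : ℕ) < (x : ℕ) := hv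
        have h2 : (x : ℕ) < (a : ℕ) + 1 := hxy
        have h3 : (x : ℕ) ≠ (a : ℕ) := fun e => hx (Fin.ext e)
        omega
      · by_cases hx2 : x = b
        · subst x
          have hy1 : y ≠ a := (hab.trans hxy).ne'
          rw [Equiv.swap_apply_right, Equiv.swap_apply_of_ne_of_ne hy1 hy] at hv
          exact absurd hv (not_lt.2 (hab.trans hxy).le)
        · by_cases hy1 : y = a
          · subst y
            rw [Equiv.swap_apply_left, Equiv.swap_apply_of_ne_of_ne hx hx2] at hv
            exact absurd hv (not_lt.2 (hxy.trans hab).le)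
          · rw [Equiv.swap_apply_of_ne_of_ne hx hx2,
                Equiv.swap_apply_of_ne_of_ne hy1 hy] at hv
            exact lt_asymm hxy hv
  · rintro ⟨rfl, rfl⟩
    refine ⟨hab, ?_⟩
    rw [Equiv.swap_apply_left, Equiv.swap_apply_right]
    exact hab

lemma len_adjacent (a : Fin n) (h : (a : ℕ) + 1 < n) :
    len (Equiv.swap a ⟨(a : ℕ) + 1, h⟩) = 1 := by
  rw [len_def, invSet_adjacent, Finset.card_singleton]

lemma len_one_structure {v : Perm (Fin n)} (hv : len v = 1) :
    ∃ (a : Fin n) (h : (a : ℕ) + 1 < n), v = Equiv.swap a ⟨(a : ℕ) + 1, h⟩ := by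
  rw [len_def, Finset.card_eq_one] at hv
  obtain ⟨q0, hq0⟩ := hv
  obtain ⟨a, b⟩ := q0
  have hmem : (a, b) ∈ invSet v := by rw [hq0]; exact Finset.mem_singleton_self _
  rw [mem_invSet] at hmem
  obtain ⟨hab, hvba⟩ := hmem
  have huniq : ∀ r ∈ invSet v, r = (a, b) := by
    intro r hr
    rw [hq0] at hr
    exact Finset.mem_singleton.1 hr
  have hab' : (a : ℕ) < (b : ℕ) := hab
  have hb : (b : ℕ) = (a : ℕ) + 1 := by
    by_contra hne
    have h2 : (a : ℕ) + 1 < (b : ℕ) := by omega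
    set c : Fin n := ⟨(a : ℕ) + 1, lt_trans h2 b.isLt⟩ with hc
    have hac : a < c := by rw [Fin.lt_def, hc]; exact Nat.lt_succ_self _
    have hcb : c < b := by rw [Fin.lt_def, hc]; exact h2
    by_cases hvc : v c < v a
    · have heq := huniq (a, c) (mem_invSet.2 ⟨hac, hvc⟩)
      rw [Prod.mk.injEq] at heq
      exact absurd (heq.2 ▸ hcb) (lt_irrefl b)
    · have hvc2 : v b < v c := lt_of_lt_of_le hvba (not_lt.1 hvc)
      have heq := huniq (c, b) (mem_invSet.2 ⟨hcb, hvc2⟩)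
      rw [Prod.mk.injEq] at heq
      exact absurd (heq.1 ▸ hac) (lt_irrefl a)
  have hbn : (a : ℕ) + 1 < n := by rw [← hb]; exact b.isLt
  refine ⟨a, hbn, ?_⟩
  have hbeq : b = ⟨(a : ℕ) + 1, hbn⟩ := Fin.ext hb
  have hzero : len (v * Equiv.swap a b) = 0 := by
    rw [len_def, Finset.card_eq_zero]
    ext ⟨x, y⟩
    simp only [mem_invSet, Finset.notMem_empty, iff_false, not_and]
    intro hxy hv2
    simp only [Perm.mul_apply] at hv2
    by_cases hx : x = a
    · subst x
      by_cases hy : y = b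
      · subst y
        rw [Equiv.swap_apply_left, Equiv.swap_apply_right] at hv2
        exact absurd hvba (not_lt.2 hv2.le)
      · have hy1 : y ≠ a := hxy.ne'
        rw [Equiv.swap_apply_left, Equiv.swap_apply_of_ne_of_ne hy1 hy] at hv2
        have hby : b < y := by
          rw [Fin.lt_def]
          have h1 : (a : ℕ) < (y : ℕ) := hxy
          have h3 : (y : ℕ) ≠ (b : ℕ) := fun e => hy (Fin.ext e)
          omega
        have heq := huniq (b, y) (mem_invSet.2 ⟨hby, hv2⟩)
        rw [Prod.mk.injEq] at heq
        exact hab.ne' heq.1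
    · by_cases hy : y = b
      · subst y
        have hx2 : x ≠ b := hxy.ne
        rw [Equiv.swap_apply_right, Equiv.swap_apply_of_ne_of_ne hx hx2] at hv2
        have hxa : x < a := by
          rw [Fin.lt_def]
          have h1 : (x : ℕ) < (b : ℕ) := hxy
          have h3 : (x : ℕ) ≠ (a : ℕ) := fun e => hx (Fin.ext e)
          omega
        have heq := huniq (x, a) (mem_invSet.2 ⟨hxa, hv2⟩)
        rw [Prod.mk.injEq] at heq
        exact hab.ne heq.2
      · by_cases hx2 : x = b
        · subst x
          have hy1 : y ≠ a := (hab.trans hxy).ne'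
          rw [Equiv.swap_apply_right, Equiv.swap_apply_of_ne_of_ne hy1 hy] at hv2
          have heq := huniq (a, y) (mem_invSet.2 ⟨hab.trans hxy, hv2⟩)
          rw [Prod.mk.injEq] at heq
          exact hy heq.2
        · by_cases hy1 : y = a
          · subst y
            rw [Equiv.swap_apply_left, Equiv.swap_apply_of_ne_of_ne hx hx2] at hv2
            have heq := huniq (x, b) (mem_invSet.2 ⟨hxy.trans hab, hv2⟩)
            rw [Prod.mk.injEq] at heq
            exact hx heq.1
          · rw [Equiv.swap_apply_of_ne_of_ne hx hx2,
                Equiv.swap_apply_of_ne_of_ne hy1 hy] at hv2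
            have heq := huniq (x, y) (mem_invSet.2 ⟨hxy, hv2⟩)
            rw [Prod.mk.injEq] at heq
            exact hx heq.1
  have hone := eq_one_of_len_eq_zero hzero
  have hv2 : v = (Equiv.swap a b)⁻¹ := mul_eq_one_iff_eq_inv.1 hone
  rw [hv2, Equiv.swap_inv, hbeq]

end AuxSCL5
/-- localizations of the canonical class of a simple transposition:
`p_{sᵢ}((j k)) = tⱼ − tₖ` when `j ≤ i < i+1 ≤ k`, and `p_{sᵢ}((j k)) = 0` otherwise;
consequently `w(p_{sᵢ}((j k))) = t_{w(j)} − t_{w(k)}` whenever `j ≤ i < i+1 ≤ k`. -/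
theorem simple_class_localization (n : ℕ) (hn : 1 ≤ n)
    (pw : Perm (Fin n) → Perm (Fin n) → Pol n)
    (hpw : ∀ w, IsCanonical w (pw w))
    (i : ℕ) (hi : i + 1 < n) (j k : Fin n) (hjk : j < k) :
    ((j : ℕ) ≤ i ∧ i + 1 ≤ (k : ℕ) →
      pw (sT n i hi) (Equiv.swap j k) = (X j - X k : Pol n)) ∧
    (¬ ((j : ℕ) ≤ i ∧ i + 1 ≤ (k : ℕ)) → pw (sT n i hi) (Equiv.swap j k) = 0) ∧
    ((j : ℕ) ≤ i ∧ i + 1 ≤ (k : ℕ) → ∀ w : Perm (Fin n),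
      pact w (pw (sT n i hi) (Equiv.swap j k)) = (X (w j) - X (w k) : Pol n)) := by
  classical
  obtain ⟨hgkm, hhom, hvan, hval⟩ := hpw (sT n i hi)
  set p : Perm (Fin n) → Pol n := pw (sT n i hi) with hp
  set a0 : Fin n := ⟨i, Nat.lt_of_succ_lt hi⟩ with ha0
  set b0 : Fin n := ⟨i + 1, hi⟩ with hb0
  have hsT : sT n i hi = Equiv.swap a0 b0 := rfl
  have ha0b0 : a0 < b0 := by rw [Fin.lt_def, ha0, hb0]; exact Nat.lt_succ_self _
  have hlen_sT : len (sT n i hi) = 1 := len_adjacent a0 hi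
  have hsT_ne_one : sT n i hi ≠ 1 := by
    intro e
    have h1 : sT n i hi a0 = a0 := by rw [e]; rfl
    rw [hsT, Equiv.swap_apply_left] at h1
    exact ha0b0.ne' h1
  -- the value of p at sT
  have hfilter : (Finset.univ.filter (fun q : Fin n × Fin n =>
      q.1 < q.2 ∧ len (Equiv.swap q.1 q.2 * sT n i hi) < len (sT n i hi)))
      = {(a0, b0)} := by
    ext ⟨x, y⟩
    simp only [Finset.mem_filter, Finset.mem_univ, true_and, Finset.mem_singleton,
      Prod.mk.injEq]
    constructor
    · rintro ⟨hxy, hlt⟩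
      rw [hlen_sT, Nat.lt_one_iff, len_eq_zero_iff] at hlt
      have heq : Equiv.swap x y = sT n i hi := by
        have h2 := mul_eq_one_iff_eq_inv.1 hlt
        rw [h2, hsT, Equiv.swap_inv]
      rw [hsT] at heq
      exact swap_eq_of_sorted hxy ha0b0 heq
    · rintro ⟨rfl, rfl⟩
      refine ⟨ha0b0, ?_⟩
      rw [hlen_sT, hsT, Equiv.swap_mul_self, scl_len_one]
      exact Nat.zero_lt_one
  have hpsT : p (sT n i hi) = X a0 - X b0 := by
    rw [hval, hfilter, Finset.prod_singleton]
  -- vanishing at short elements other than sT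
  have hne_sT : ∀ v : Perm (Fin n), len v ≤ 1 → v ≠ sT n i hi → p v = 0 := by
    intro v hlv hvne
    apply hvan
    intro hb
    rcases bruhat_mono hb with h | h
    · exact hvne h.symm
    · rw [hlen_sT] at h; omega
  -- main uniqueness argument
  have hmain : ∀ N : ℕ, ∀ v : Perm (Fin n), len v = N → p v = qcl i v := by
    intro N
    induction N using Nat.strong_induction_on with
    | _ N IH =>
      intro v hlv
      by_cases h0 : N = 0
      · subst h0
        have hv1 : v = 1 := eq_one_of_len_eq_zero hlv
        rw [hv1, qcl_one]
        exact hne_sT 1 (by rw [scl_len_one]; omega) (fun e => hsT_ne_one e.symm)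
      · by_cases h1 : N = 1
        · subst h1
          obtain ⟨a, hax, hveq⟩ := len_one_structure hlv
          by_cases hia : (a : ℕ) = i
          · have hveq2 : v = sT n i hi := by
              rw [hveq, hsT]
              congr 1
              · exact Fin.ext hia
              · exact Fin.ext (by simp [hb0, hia])
            rw [hveq2, hpsT, hsT, qcl_swap i ha0b0,
              if_pos (by rw [ha0, hb0]; exact ⟨le_refl i, le_refl (i + 1)⟩)]
          · have hab : a < (⟨(a : ℕ) + 1, hax⟩ : Fin n) := by
              rw [Fin.lt_def]; exact Nat.lt_succ_self _
            rw [hveq, qcl_swap i hab, if_neg (by rintro ⟨hc1, hc2⟩; exact hia (le_antisymm hc1 (by exact Nat.le_of_succ_le_succ hc2)))]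
            apply hne_sT
            · rw [← hveq, hlv]
            · intro e
              rw [hsT] at e
              have := swap_eq_of_sorted hab ha0b0 e
              exact hia (congrArg Fin.val this.1)
        · -- N ≥ 2
          have hcard : 1 < (invSet v).card := by
            rw [← len_def, hlv]; omega
          obtain ⟨q1, hq1, q2, hq2, hq12⟩ := Finset.one_lt_card.1 hcard
          have hdvd : ∀ q ∈ invSet v,
              (X (v q.2) - X (v q.1) : Pol n) ∣ (p v - qcl i v) := by
            intro q hq
            obtain ⟨x, y⟩ := q
            rw [mem_invSet] at hq
            obtain ⟨hxy, hvv⟩ := hq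
            have hswap : Equiv.swap (v y) (v x) * v = v * Equiv.swap x y := by
              rw [Equiv.swap_comm, ← mul_swap_eq_swap_mul]
            have hlen2 : len (v * Equiv.swap x y) < N := by
              rw [← hlv]; exact len_mul_swap_lt hxy hvv
            have hIH := IH _ hlen2 (v * Equiv.swap x y) rfl
            have hd1 := hgkm v (v y) (v x) hvv
            have hd2 := qcl_gkm i v (v y) (v x) hvv
            rw [hswap] at hd1 hd2
            have hsub := dvd_sub hd1 hd2
            have heq2 : (p v - p (v * Equiv.swap x y)) -
                (qcl i v - qcl i (v * Equiv.swap x y)) = p v - qcl i v := by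
              rw [hIH]; ring
            rwa [heq2] at hsub
          have hd1 := hdvd q1 hq1
          have hd2 := hdvd q2 hq2
          obtain ⟨hx1, hv1⟩ := mem_invSet.1 hq1
          obtain ⟨hx2, hv2⟩ := mem_invSet.1 hq2
          have hhomd : (p v - qcl i v).IsHomogeneous 1 := by
            have hh := hhom v
            rw [hlen_sT] at hh
            exact hh.sub (qcl_isHomogeneous i v)
          have hpairne : ((v q1.2, v q1.1) : Fin n × Fin n) ≠ (v q2.2, v q2.1) := by
            intro e
            rw [Prod.mk.injEq] at e
            exact hq12 (Prod.ext (v.injective e.2) (v.injective e.1))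
          have hzero := linear_zero hhomd hv1 hv2 hpairne hd1 hd2
          exact sub_eq_zero.1 hzero
  have hkey : ∀ v, p v = qcl i v := fun v => hmain (len v) v rfl
  refine ⟨?_, ?_, ?_⟩
  · intro hcond
    rw [hkey, qcl_swap i hjk, if_pos hcond]
  · intro hcond
    rw [hkey, qcl_swap i hjk, if_neg hcond]
  · intro hcond w
    rw [hkey, qcl_swap i hjk, if_pos hcond, pact, map_sub, rename_X, rename_X]
end
end

section
/- For every w, v ∈ S_n, the dot action is trivial modulo 𝔪R on canonical classes: w · p_v − p_v ∈ 𝔪R. Consequently the dot action of S_n on the quotient R/𝔪R ≅ H^*(GL_n(ℂ)/B) fixes every Schubert class, i.e. the induced representation is a direct sum of trivial representations. -/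
open MvPolynomial Equiv Finset

noncomputable section

section Aux

variable {n : ℕ}

/-- The substitution `X k ↦ X l` (all other variables fixed). -/
def subE (n : ℕ) (k l : Fin n) : Pol n →ₐ[ℂ] Pol n :=
  aeval (fun m => if m = k then X l else X m)

lemma subE_X (k l m : Fin n) : subE n k l (X m) = if m = k then X l else X m := by
  simp [subE]

lemma dvd_sub_subE (k l : Fin n) (f : Pol n) :
    (X k - X l : Pol n) ∣ f - subE n k l f := by
  induction f using MvPolynomial.induction_on with
  | C a => simp [subE]
  | add p q hp hq =>
    have := dvd_add hp hq
    rw [map_add]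
    simpa [add_sub_add_comm] using this
  | mul_X p m hp =>
    rw [map_mul, subE_X]
    split_ifs with hm
    · subst hm
      have : p * X m - subE n m l p * X l
          = (p - subE n m l p) * X m + subE n m l p * (X m - X l) := by ring
      rw [this]
      exact dvd_add (hp.mul_right _) (dvd_mul_left _ _)
    · have : p * X m - subE n k l p * X m = (p - subE n k l p) * X m := by ring
      rw [this]
      exact hp.mul_right _

lemma dvd_of_subE_eq_zero {k l : Fin n} {f : Pol n} (h : subE n k l f = 0) :
    (X k - X l : Pol n) ∣ f := by
  simpa [h] using dvd_sub_subE k l f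

lemma subE_eq_zero_of_dvd {k l : Fin n} {f : Pol n} (h : (X k - X l : Pol n) ∣ f) :
    subE n k l f = 0 := by
  obtain ⟨c, rfl⟩ := h
  rw [map_mul, map_sub, subE_X, subE_X, if_pos rfl]
  have hl : (if l = k then (X l : Pol n) else X l) = X l := by split <;> rfl
  rw [hl, sub_self, zero_mul]

/-- `f − (i j)·f` is divisible by `tᵢ − tⱼ`. -/
lemma dvd_sub_rename_swap (i j : Fin n) (f : Pol n) :
    (X i - X j : Pol n) ∣ f - rename ⇑(Equiv.swap i j) f := by
  apply dvd_of_subE_eq_zero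
  rw [map_sub]
  have : subE n i j (rename ⇑(Equiv.swap i j) f) = subE n i j f := by
    show aeval _ (rename _ f) = aeval _ f
    rw [aeval_rename]
    have hu : ((fun m => if m = i then (X j : Pol n) else X m) ∘ ⇑(Equiv.swap i j))
        = (fun m => if m = i then (X j : Pol n) else X m) := by
      funext m
      rcases eq_or_ne m i with rfl | hmi
      · simp [Equiv.swap_apply_def]
      · rcases eq_or_ne m j with rfl | hmj
        · simp [Equiv.swap_apply_def]
        · simp [Function.comp, Equiv.swap_apply_of_ne_of_ne hmi hmj, if_neg hmi]
    rw [hu]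
  rw [this, sub_self]

lemma X_sub_X_ne_zero {i j : Fin n} (hij : i ≠ j) : (X i - X j : Pol n) ≠ 0 :=
  sub_ne_zero.mpr (fun h => hij (MvPolynomial.X_injective h))

lemma X_sub_X_mem_mIdeal (i j : Fin n) : (X i - X j : Pol n) ∈ mIdeal n :=
  sub_mem (Ideal.subset_span ⟨i, rfl⟩) (Ideal.subset_span ⟨j, rfl⟩)

/-- GKM divisibility for an arbitrary pair of distinct indices. -/
lemma GKM.dvd' {p : Perm (Fin n) → Pol n} (hp : GKM n p) (v : Perm (Fin n))
    {i j : Fin n} (hij : i ≠ j) :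
    (X i - X j : Pol n) ∣ (p v - p (Equiv.swap i j * v)) := by
  rcases hij.lt_or_gt with h | h
  · exact hp v i j h
  · have h2 := hp v j i h
    rw [Equiv.swap_comm j i] at h2
    rw [show (X i - X j : Pol n) = -(X j - X i) by ring]
    exact (neg_dvd).mpr h2

lemma dot_one (p : Perm (Fin n) → Pol n) : dot 1 p = p := by
  funext v
  simp [dot, pact, Equiv.Perm.coe_one, rename_id]

lemma dot_mul (a b : Perm (Fin n)) (p : Perm (Fin n) → Pol n) :
    dot (a * b) p = dot a (dot b p) := by
  funext v
  show rename ⇑(a * b) (p ((a * b)⁻¹ * v)) = rename ⇑a (rename ⇑b (p (b⁻¹ * (a⁻¹ * v))))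
  rw [rename_rename, ← Equiv.Perm.coe_mul, mul_inv_rev, mul_assoc]

/-- The dot action preserves the GKM condition. -/
lemma GKM.dot {p : Perm (Fin n) → Pol n} (hp : GKM n p) (w : Perm (Fin n)) :
    GKM n (dot w p) := by
  intro v i j hij
  have hne : w⁻¹ i ≠ w⁻¹ j := fun h => (ne_of_lt hij) (w⁻¹.injective h)
  have hd := hp.dvd' (w⁻¹ * v) hne
  have hd2 := _root_.map_dvd (rename ⇑w : Pol n →ₐ[ℂ] Pol n) hd
  have e1 : (rename ⇑w : Pol n →ₐ[ℂ] Pol n) (X (w⁻¹ i) - X (w⁻¹ j)) = X i - X j := by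
    rw [map_sub, rename_X, rename_X, Equiv.Perm.inv_def, Equiv.apply_symm_apply, Equiv.apply_symm_apply]
  have e2 : Equiv.swap (w⁻¹ i) (w⁻¹ j) * (w⁻¹ * v) = w⁻¹ * (Equiv.swap i j * v) := by
    rw [Equiv.swap_apply_apply]
    group
  rw [e1, map_sub, e2] at hd2
  simpa [_root_.dot, pact, map_sub] using hd2

/-- The key lemma: for a transposition `τ` and GKM class `p`, `τ·p − p ∈ 𝔪R`. -/
lemma dot_swap_sub_mem {i j : Fin n} (hij : i ≠ j) {p : Perm (Fin n) → Pol n}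
    (hp : GKM n p) : dot (Equiv.swap i j) p - p ∈ mR n := by
  set τ := Equiv.swap i j with hτ
  have hτinv : τ⁻¹ = τ := Equiv.swap_inv i j
  have hdotval : ∀ v, dot τ p v = rename ⇑τ (p (τ * v)) := by
    intro v; simp [dot, pact, hτinv]
  have hdvd : ∀ v, (X i - X j : Pol n) ∣ (p v - dot τ p v) := by
    intro v
    rw [hdotval v]
    have h1 : (X i - X j : Pol n) ∣ p v - p (τ * v) := hp.dvd' v hij
    have h2 := dvd_sub_rename_swap i j (p (τ * v))
    rw [← hτ] at h2
    simpa [sub_add_sub_cancel] using dvd_add h1 h2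
  choose g hg using hdvd
  -- g(τ v) = τ (g v)
  have hgτ : ∀ v, g (τ * v) = rename ⇑τ (g v) := by
    intro v
    have h1 := hg v
    have h2 := hg (τ * v)
    rw [hdotval v] at h1
    rw [hdotval (τ * v)] at h2
    have hττ : τ * (τ * v) = v := by
      rw [← mul_assoc, Equiv.swap_mul_self, one_mul]
    rw [hττ] at h2
    have h3 := congrArg (rename ⇑τ) h1
    have hren2 : ∀ f : Pol n, rename ⇑τ (rename ⇑τ f) = f := by
      intro f
      rw [rename_rename]
      have : (⇑τ ∘ ⇑τ) = id := by
        funext x; simp [hτ]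
      rw [this, rename_id, AlgHom.id_apply]
    rw [map_sub, hren2] at h3
    have hXτ : rename ⇑τ ((X i - X j : Pol n)) = X j - X i := by
      rw [map_sub, rename_X, rename_X, hτ, Equiv.swap_apply_left, Equiv.swap_apply_right]
    rw [map_mul, hXτ] at h3
    -- h3 : rename τ (p v) - p (τ * v) = (X j - X i) * rename τ (g v)
    -- h2 : p (τ * v) - rename τ (p v) = (X i - X j) * g (τ * v)
    apply mul_left_cancel₀ (X_sub_X_ne_zero hij)
    rw [← h2]
    rw [show (X i - X j : Pol n) * rename ⇑τ (g v) = -((X j - X i) * rename ⇑τ (g v)) by ring]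
    rw [← h3]
    ring
  have hgGKM : GKM n g := by
    intro v k l hkl
    by_cases hset : (k = i ∧ l = j) ∨ (k = j ∧ l = i)
    · have hswap : Equiv.swap k l = τ := by
        rcases hset with ⟨rfl, rfl⟩ | ⟨rfl, rfl⟩
        · rfl
        · rw [hτ, Equiv.swap_comm]
      rw [hswap, hgτ v]
      have := dvd_sub_rename_swap k l (g v)
      rwa [hswap] at this
    · push_neg at hset
      have hkl' : k ≠ l := ne_of_lt hkl
      have H1 := (hp.dvd' v (ne_of_lt hkl))
      have H2 := ((hp.dot τ).dvd' v (ne_of_lt hkl))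
      have H : (X k - X l : Pol n) ∣
          (p v - dot τ p v) - (p (Equiv.swap k l * v) - dot τ p (Equiv.swap k l * v)) := by
        have := dvd_sub H1 H2
        rw [show p v - p (Equiv.swap k l * v) - (dot τ p v - dot τ p (Equiv.swap k l * v))
            = (p v - dot τ p v) - (p (Equiv.swap k l * v) - dot τ p (Equiv.swap k l * v))
            by ring] at this
        exact this
      rw [hg v, hg (Equiv.swap k l * v),
        show (X i - X j : Pol n) * g v - (X i - X j) * g (Equiv.swap k l * v)
          = (X i - X j) * (g v - g (Equiv.swap k l * v)) by ring] at H
      have hz := subE_eq_zero_of_dvd H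
      rw [map_mul, map_sub, subE_X, subE_X] at hz
      rw [← apply_ite (X : Fin n → Pol n), ← apply_ite (X : Fin n → Pol n)] at hz
      have hij' : (if i = k then l else i) ≠ (if j = k then l else j) := by
        split_ifs with h1 h2 h2
        · exact absurd (h1.trans h2.symm) hij
        · exact fun h => hset.1 h1.symm h
        · exact fun h => hset.2 h2.symm h.symm
        · exact hij
      have hXne : (X (if i = k then l else i) - X (if j = k then l else j) : Pol n) ≠ 0 :=
        X_sub_X_ne_zero hij'
      have : subE n k l (g v - g (Equiv.swap k l * v)) = 0 := by
        rcases mul_eq_zero.mp hz with h | h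
        · exact absurd h hXne
        · exact h
      exact dvd_of_subE_eq_zero this
  have heq : dot τ p - p = (-(X i - X j : Pol n)) • g := by
    funext v
    have := hg v
    simp only [Pi.sub_apply, Pi.smul_apply, smul_eq_mul]
    rw [show dot τ p v - p v = -(p v - dot τ p v) by ring, this]
    ring
  rw [heq]
  exact Submodule.subset_span
    ⟨-(X i - X j), neg_mem (X_sub_X_mem_mIdeal i j), g, hgGKM, rfl⟩

/-- For any `w` and any GKM class `p`, `w·p − p ∈ 𝔪R`. -/
lemma dot_sub_mem (w : Perm (Fin n)) {p : Perm (Fin n) → Pol n} (hp : GKM n p) :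
    dot w p - p ∈ mR n := by
  refine Equiv.Perm.swap_induction_on w (by rw [dot_one, sub_self]; exact zero_mem _)
    (fun f x y hxy ih => ?_)
  have := add_mem (dot_swap_sub_mem hxy (hp.dot f)) ih
  rw [sub_add_sub_cancel, ← dot_mul] at this
  exact this

end Aux

/-- the dot action is trivial modulo `𝔪R` on canonical classes:
`w · p_v − p_v ∈ 𝔪R`; consequently the induced action on
`R/𝔪R ≅ H^*(GLₙ(ℂ)/B)` fixes every Schubert class. -/
theorem dot_action_trivial_mod_mR (n : ℕ) (hn : 1 ≤ n)
    (pw : Perm (Fin n) → Perm (Fin n) → Pol n)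
    (hpw : ∀ w, IsCanonical w (pw w))
    (w v : Perm (Fin n)) :
    dot w (pw v) - pw v ∈ mR n ∧
    (Submodule.Quotient.mk (dot w (pw v)) : (Perm (Fin n) → Pol n) ⧸ mR n)
      = Submodule.Quotient.mk (pw v) := by
  have h1 : dot w (pw v) - pw v ∈ mR n := dot_sub_mem w (hpw v).1
  exact ⟨h1, (Submodule.Quotient.eq (mR n)).mpr h1⟩
end
end
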